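/- Let n, p be positive integers with 2p ≤ n, and let Y, Y' ∈ ℝ^{n×p} both have orthonormal columns (YᵀY = I_p and Y'ᵀY' = I_p). Let σ_1 ≥ σ_2 ≥ … ≥ σ_p ≥ 0 be the singular values of the p×p matrix YᵀY', and define the principal angles θ_i := arccos(σ_{p−i+1}) ∈ [0, π/2] for i = 1, …, p. Then there exist an orthonormal family y_1, …, y_{2p} of vectors in ℝⁿ and orthogonal matrices P, Q ∈ ℝ^{p×p} such that YP = [y_1, …, y_p] and Y'Q = [cos(θ_1) y_1 + sin(θ_1) y_{p+1}, …, cos(θ_p) y_p + sin(θ_p) y_{2p}] (the matrix whose i-th column is cos(θ_i) y_i + sin(θ_i) y_{p+i}). -/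

import Mathlib

open Matrix

/-- Jordan's principal angles: normal form of a pair of subspaces.
Let `2p ≤ n` and let `Y, Y' ∈ ℝ^{n×p}` have orthonormal columns. Let
`σ₁ ≥ … ≥ σₚ ≥ 0` be the singular values of `YᵀY'` (witnessed by an SVD
`YᵀY' = A (diag σ) Bᵀ` with `A, B` orthogonal) and set `θᵢ = arccos(σ_{p−i+1})`.
Then there exist an orthonormal family `y₁, …, y_{2p}` of `ℝⁿ` and orthogonal
matrices `P, Q` with `YP = [y₁, …, yₚ]` and
`Y'Q = [cos(θ₁)y₁ + sin(θ₁)y_{p+1}, …, cos(θₚ)yₚ + sin(θₚ)y_{2p}]`. -/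
theorem principal_angles_normal_form
    (n p : ℕ) (hp : 0 < p) (h2p : 2 * p ≤ n)
    (Y Y' : Matrix (Fin n) (Fin p) ℝ)
    (hY : Yᵀ * Y = 1) (hY' : Y'ᵀ * Y' = 1)
    (σ : Fin p → ℝ) (A B : Matrix (Fin p) (Fin p) ℝ)
    (hA : Aᵀ * A = 1) (hB : Bᵀ * B = 1)
    (hσmono : ∀ i j : Fin p, i ≤ j → σ j ≤ σ i)
    (hσ0 : ∀ i, 0 ≤ σ i)
    (hSVD : Yᵀ * Y' = A * Matrix.diagonal σ * Bᵀ) :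
    ∃ (y : Fin (2 * p) → Fin n → ℝ) (P Q : Matrix (Fin p) (Fin p) ℝ),
      (∀ i j : Fin (2 * p), y i ⬝ᵥ y j = if i = j then (1 : ℝ) else 0) ∧
      Pᵀ * P = 1 ∧ Qᵀ * Q = 1 ∧
      (∀ (i : Fin p) (r : Fin n),
        (Y * P) r i = y ⟨i.val, by have := i.isLt; omega⟩ r) ∧
      (∀ (i : Fin p) (r : Fin n),
        (Y' * Q) r i =
          Real.cos (Real.arccos (σ i.rev)) * y ⟨i.val, by have := i.isLt; omega⟩ r +
          Real.sin (Real.arccos (σ i.rev)) * y ⟨p + i.val, by have := i.isLt; omega⟩ r) := by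
  classical
  -- matrix identities for the rotated frames
  have hUU : (Y * A)ᵀ * (Y * A) = 1 := by
    rw [transpose_mul]
    calc Aᵀ * Yᵀ * (Y * A) = Aᵀ * (Yᵀ * Y) * A := by simp [Matrix.mul_assoc]
    _ = 1 := by rw [hY, Matrix.mul_one, hA]
  have hVV : (Y' * B)ᵀ * (Y' * B) = 1 := by
    rw [transpose_mul]
    calc Bᵀ * Y'ᵀ * (Y' * B) = Bᵀ * (Y'ᵀ * Y') * B := by simp [Matrix.mul_assoc]
    _ = 1 := by rw [hY', Matrix.mul_one, hB]
  have hUV : (Y * A)ᵀ * (Y' * B) = Matrix.diagonal σ := by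
    rw [transpose_mul]
    calc Aᵀ * Yᵀ * (Y' * B) = Aᵀ * (Yᵀ * Y') * B := by simp [Matrix.mul_assoc]
    _ = Aᵀ * (A * Matrix.diagonal σ * Bᵀ) * B := by rw [hSVD]
    _ = (Aᵀ * A) * Matrix.diagonal σ * (Bᵀ * B) := by simp [Matrix.mul_assoc]
    _ = Matrix.diagonal σ := by rw [hA, hB, Matrix.one_mul, Matrix.mul_one]
  -- column vectors (with index reversal baked in) and reversed singular values
  set u : Fin p → (Fin n → ℝ) := fun i r => (Y * A) r i.rev with hu_def
  set v : Fin p → (Fin n → ℝ) := fun i r => (Y' * B) r i.rev with hv_def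
  set τ : Fin p → ℝ := fun i => σ i.rev with hτ_def
  have entry : ∀ (M N : Matrix (Fin n) (Fin p) ℝ) (i j : Fin p),
      (fun r => M r i) ⬝ᵥ (fun r => N r j) = (Mᵀ * N) i j := by
    intro M N i j
    simp [Matrix.mul_apply, dotProduct]
  have huu : ∀ i j, u i ⬝ᵥ u j = if i = j then (1:ℝ) else 0 := by
    intro i j
    have h := entry (Y*A) (Y*A) i.rev j.rev
    rw [hUU] at h
    simpa [hu_def, Matrix.one_apply, Fin.rev_inj, dotProduct] using h
  have hvv : ∀ i j, v i ⬝ᵥ v j = if i = j then (1:ℝ) else 0 := by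
    intro i j
    have h := entry (Y'*B) (Y'*B) i.rev j.rev
    rw [hVV] at h
    simpa [hv_def, Matrix.one_apply, Fin.rev_inj, dotProduct] using h
  have huv : ∀ i j, u i ⬝ᵥ v j = if i = j then τ i else 0 := by
    intro i j
    have h := entry (Y*A) (Y'*B) i.rev j.rev
    rw [hUV] at h
    simpa [hu_def, hv_def, hτ_def, Matrix.diagonal_apply, Fin.rev_inj, dotProduct] using h
  set w : Fin p → (Fin n → ℝ) := fun i r => v i r - τ i * u i r with hw_def
  have huw : ∀ i j, u i ⬝ᵥ w j = 0 := by
    intro i j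
    have h1 := huv i j
    have h2 := huu i j
    simp only [dotProduct] at h1 h2 ⊢
    have expand : ∀ r, u i r * w j r = u i r * v j r - τ j * (u i r * u j r) := by
      intro r; simp only [hw_def]; ring
    simp_rw [expand]
    rw [Finset.sum_sub_distrib, ← Finset.mul_sum, h1, h2]
    by_cases h : i = j <;> simp [h]
  have hww : ∀ i j, w i ⬝ᵥ w j = if i = j then 1 - τ i^2 else 0 := by
    intro i j
    have h1 := hvv i j
    have h2 := huv j i
    have h3 := huv i j
    have h4 := huu i j
    simp only [dotProduct] at h1 h2 h3 h4 ⊢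
    have expand : ∀ r, w i r * w j r
        = v i r * v j r - τ j * (u j r * v i r) - τ i * (u i r * v j r)
          + (τ i * τ j) * (u i r * u j r) := by
      intro r; simp only [hw_def]; ring
    simp_rw [expand]
    rw [Finset.sum_add_distrib, Finset.sum_sub_distrib, Finset.sum_sub_distrib,
        ← Finset.mul_sum, ← Finset.mul_sum, ← Finset.mul_sum]
    have h2' : ∀ r, u j r * v i r = u j r * v i r := fun _ => rfl
    rw [h1, h4, h2, h3]
    by_cases h : i = j
    · subst h; simp; ring
    · simp [h, Ne.symm h]
  have hτ0 : ∀ i, 0 ≤ τ i := fun i => hσ0 _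
  have hτ1 : ∀ i, τ i ≤ 1 := by
    intro i
    have h0 : (0:ℝ) ≤ w i ⬝ᵥ w i := by
      simp only [dotProduct]
      exact Finset.sum_nonneg fun r _ => mul_self_nonneg _
    rw [hww i i, if_pos rfl] at h0
    nlinarith [hτ0 i]
  set c : Fin p → ℝ := fun i => Real.sqrt (1 - τ i ^ 2) with hc_def
  have hc_sq : ∀ i, c i ^ 2 = 1 - τ i ^ 2 := by
    intro i
    rw [hc_def]
    exact Real.sq_sqrt (by nlinarith [hτ0 i, hτ1 i])
  -- the candidate family on Fin n (junk outside the first 2p slots)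
  set V : Fin n → (Fin n → ℝ) := fun j =>
    if h : (j : ℕ) < p then u ⟨(j : ℕ), h⟩
    else if h2 : (j : ℕ) < 2 * p then
      (c ⟨(j : ℕ) - p, by omega⟩)⁻¹ • w ⟨(j : ℕ) - p, by omega⟩
    else 0 with hV_def
  set s : Set (Fin n) := {j | (j : ℕ) < p} ∪ {j | ∃ i : Fin p, (j : ℕ) = p + (i : ℕ) ∧ c i ≠ 0}
    with hs_def
  have hV1 : ∀ (j : Fin n) (h : (j : ℕ) < p), V j = u ⟨(j : ℕ), h⟩ := by
    intro j h
    simp only [hV_def]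
    rw [dif_pos h]
  have hV2 : ∀ (j : Fin n) (a : Fin p), (j : ℕ) = p + (a : ℕ) → V j = (c a)⁻¹ • w a := by
    intro j a ha
    simp only [hV_def]
    rw [dif_neg (by omega), dif_pos (by have := a.isLt; omega)]
    have : (⟨(j : ℕ) - p, by omega⟩ : Fin p) = a := by
      apply Fin.ext; simp; omega
    rw [this]
  -- orthonormality of the restricted family
  set V' : Fin n → EuclideanSpace ℝ (Fin n) := fun j => WithLp.toLp 2 (V j) with hV'_def
  have hV'V : ∀ j, V' j = V j := fun j => rfl
  have horth : Orthonormal ℝ (s.restrict V') := by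
    rw [orthonormal_iff_ite]
    rintro ⟨j, hj⟩ ⟨j', hj'⟩
    simp only [Set.restrict_apply, Subtype.mk.injEq]
    simp only [hs_def, Set.mem_union, Set.mem_setOf_eq] at hj hj'
    have hin : (inner ℝ (V' j) (V' j') : ℝ) = V j ⬝ᵥ V j' := by
      simp [PiLp.inner_apply, dotProduct, hV'_def]
      exact Finset.sum_congr rfl (fun _ _ => mul_comm _ _)
    show inner ℝ (V' j) (V' j') = if j = j' then 1 else 0
    rw [hin]
    rcases hj with hj | ⟨a, ha, hca⟩ <;> rcases hj' with hj' | ⟨b, hb, hcb⟩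
    · rw [hV1 j hj, hV1 j' hj', huu]
      simp [Fin.ext_iff]
    · have hne : j ≠ j' := by
        intro h
        have : (j : ℕ) = (j' : ℕ) := by rw [h]
        omega
      rw [hV1 j hj, hV2 j' b hb, dotProduct_smul, huw, if_neg hne]
      simp
    · have hne : j ≠ j' := by
        intro h
        have : (j : ℕ) = (j' : ℕ) := by rw [h]
        omega
      rw [hV2 j a ha, hV1 j' hj', smul_dotProduct, dotProduct_comm, huw, if_neg hne]
      simp
    · rw [hV2 j a ha, hV2 j' b hb, smul_dotProduct, dotProduct_smul, hww]
      by_cases hab : a = b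
      · subst hab
        have hjj : j = j' := by apply Fin.ext; omega
        rw [if_pos rfl, if_pos hjj, ← hc_sq, smul_eq_mul, smul_eq_mul, pow_two]
        field_simp
      · have hne : j ≠ j' := by
          intro h
          apply hab
          apply Fin.ext
          have : (j : ℕ) = (j' : ℕ) := by rw [h]
          omega
        rw [if_neg hab, if_neg hne]
        simp
  -- extend to an orthonormal basis
  have card : Module.finrank ℝ (EuclideanSpace ℝ (Fin n)) = Fintype.card (Fin n) := by
    simp
  obtain ⟨b, hb⟩ := horth.exists_orthonormalBasis_extension_of_card_eq card
  -- the orthonormal family y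
  refine ⟨fun i r => b ⟨(i : ℕ), by have := i.isLt; omega⟩ r,
    A.submatrix id Fin.rev, B.submatrix id Fin.rev, ?_, ?_, ?_, ?_, ?_⟩
  · -- orthonormality of y
    intro i j
    have hbo := b.orthonormal
    rw [orthonormal_iff_ite] at hbo
    have h := hbo ⟨(i : ℕ), by have := i.isLt; omega⟩ ⟨(j : ℕ), by have := j.isLt; omega⟩
    have hin : (inner ℝ (b ⟨(i : ℕ), by have := i.isLt; omega⟩)
        (b ⟨(j : ℕ), by have := j.isLt; omega⟩) : ℝ)
        = (fun r => b ⟨(i : ℕ), by have := i.isLt; omega⟩ r)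
          ⬝ᵥ (fun r => b ⟨(j : ℕ), by have := j.isLt; omega⟩ r) := by
      simp [PiLp.inner_apply, dotProduct]
      exact Finset.sum_congr rfl (fun _ _ => mul_comm _ _)
    rw [hin] at h
    rw [h]
    simp [Fin.ext_iff]
  · -- Pᵀ P = 1
    ext i j
    have h := congrFun (congrFun hA i.rev) j.rev
    simp only [Matrix.mul_apply, transpose_apply, Matrix.one_apply] at h ⊢
    simp only [submatrix_apply, id_eq]
    rw [h]
    simp [Fin.rev_inj]
  · -- Qᵀ Q = 1
    ext i j
    have h := congrFun (congrFun hB i.rev) j.rev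
    simp only [Matrix.mul_apply, transpose_apply, Matrix.one_apply] at h ⊢
    simp only [submatrix_apply, id_eq]
    rw [h]
    simp [Fin.rev_inj]
  · -- Y P columns
    intro i r
    show (Y * A.submatrix id Fin.rev) r i = b ⟨(i : ℕ), by have := i.isLt; omega⟩ r
    have hmem : (⟨(i : ℕ), by have := i.isLt; omega⟩ : Fin n) ∈ s := Or.inl i.isLt
    rw [hb _ hmem, hV'V, hV1 _ i.isLt]
    show (Y * A.submatrix id Fin.rev) r i = u i r
    simp [hu_def, Matrix.mul_apply]
  · -- Y' Q columns
    intro i r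
    show (Y' * B.submatrix id Fin.rev) r i =
        Real.cos (Real.arccos (σ i.rev)) * b ⟨(i : ℕ), by have := i.isLt; omega⟩ r +
        Real.sin (Real.arccos (σ i.rev)) * b ⟨p + (i : ℕ), by have := i.isLt; omega⟩ r
    have hYQ : (Y' * B.submatrix id Fin.rev) r i = v i r := by
      simp [hv_def, Matrix.mul_apply]
    have hcos : Real.cos (Real.arccos (σ i.rev)) = τ i :=
      Real.cos_arccos (by linarith [hτ0 i]) (hτ1 i)
    have hsin : Real.sin (Real.arccos (σ i.rev)) = c i := by
      rw [Real.sin_arccos, hc_def]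
    rw [hYQ, hcos, hsin]
    have hy1 : b (⟨(i : ℕ), by have := i.isLt; omega⟩ : Fin n) r = u i r := by
      rw [hb _ (Or.inl i.isLt : (⟨(i : ℕ), by have := i.isLt; omega⟩ : Fin n) ∈ s),
        hV'V, hV1 _ i.isLt]
    rw [hy1]
    by_cases hci : c i = 0
    · have hτi : τ i = 1 := by
        have h := hc_sq i
        rw [hci] at h
        nlinarith [hτ0 i]
      have hwi : w i r = 0 := by
        have h0 : w i ⬝ᵥ w i = 0 := by rw [hww i i, if_pos rfl, hτi]; ring
        simp only [dotProduct] at h0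
        have hnn : ∀ x ∈ Finset.univ, (0:ℝ) ≤ w i x * w i x := fun x _ => mul_self_nonneg _
        have hr := (Finset.sum_eq_zero_iff_of_nonneg hnn).mp h0 r (Finset.mem_univ r)
        nlinarith [hr]
      have hv : v i r = τ i * u i r := by
        have h : v i r - τ i * u i r = 0 := hwi
        linarith
      rw [hv, hci]
      ring
    · have hmem : (⟨p + (i : ℕ), by have := i.isLt; omega⟩ : Fin n) ∈ s :=
        Or.inr ⟨i, rfl, hci⟩
      have hy2 : b (⟨p + (i : ℕ), by have := i.isLt; omega⟩ : Fin n) r = (c i)⁻¹ * w i r := by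
        rw [hb _ hmem, hV'V, hV2 _ i rfl]
        rfl
      rw [hy2]
      have hw : w i r = v i r - τ i * u i r := rfl
      rw [hw]
      field_simp
      ring
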